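/- Let α > 1, β > 2, γ = α + β, and 0 ≤ ε < γ²/2. Define u_ε(x) = sin^α(x) cos^β(x) ₂F₁( γ/2 + √(ε/2), γ/2 − √(ε/2); α+½; sin²x ) and v_ε(x) = cos^{2β−1}(x) ₂F₁( γ/2 + √(ε/2), γ/2 − √(ε/2); α+½; sin²x ) for x ∈ (0, π/2), and assume u_ε > 0 on (0, π/2). Define V₁(x) = α(α+1)/(2 sin²x) + (β−2)(β−1)/(2 cos²x) − (log v_ε)''(x) and κ = (log u_ε)'. Then for every integer n ≥ 0, the function φ_n = (−ψ_{0,n}' + κ ψ_{0,n})/√2 satisfies −½φ_n'' + V₁φ_n = E_n φ_n on (0, π/2), where ψ_{0,n} is the n-th Pöschl–Teller eigenfunction and E_n = ½(2n+γ)². -/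

import Mathlib

open Filter Real Topology

/-- The Pochhammer symbol `(a)_m = a(a+1)⋯(a+m-1)`. -/
noncomputable def poch (a : ℝ) (m : ℕ) : ℝ := ∏ j ∈ Finset.range m, (a + j)

/-- The Gauss hypergeometric series `₂F₁(a,b;c;s) = Σ_{k≥0} (a)_k(b)_k/((c)_k k!) s^k`. -/
noncomputable def hyp2F1 (a b c s : ℝ) : ℝ :=
  ∑' k : ℕ, poch a k * poch b k / (poch c k * (Nat.factorial k : ℝ)) * s ^ k

/-- The normalized Pöschl–Teller eigenfunctions `ψ_{0,n}`, with `γ = α + β`. -/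
noncomputable def PTeigenfun (α β : ℝ) (n : ℕ) (x : ℝ) : ℝ :=
  Real.sqrt (2 * (2 * (n : ℝ) + (α + β)) * Real.Gamma ((n : ℝ) + (α + β)) * poch (α + 1 / 2) n /
      ((Nat.factorial n : ℝ) * Real.Gamma (α + 1 / 2) * Real.Gamma (β + 1 / 2) *
        poch (β + 1 / 2) n)) *
    Real.sin x ^ α * Real.cos x ^ β *
    ∑ m ∈ Finset.range (n + 1),
      poch (-(n : ℝ)) m * poch ((n : ℝ) + (α + β)) m /
        (poch (α + 1 / 2) m * (Nat.factorial m : ℝ)) * Real.sin x ^ (2 * m)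


/-- polynomial-weight upgrade of summability of `|co k| t^k`. -/
lemma upg (co : ℕ → ℝ) (hsml : ∀ t : ℝ, 0 < t → t < 1 → Summable fun k : ℕ => |co k| * t ^ k)
    (j : ℕ) : ∀ t : ℝ, 0 < t → t < 1 → Summable fun k : ℕ => (k : ℝ) ^ j * |co k| * t ^ k := by
  intro t ht ht1
  set t' : ℝ := (t + 1) / 2 with ht'def
  have ht'0 : 0 < t' := by positivity
  have htt' : t < t' := by rw [ht'def]; linarith
  have ht'1 : t' < 1 := by rw [ht'def]; linarith
  have hq : |t / t'| < 1 := by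
    rw [abs_of_pos (by positivity)]
    rw [div_lt_one ht'0]; exact htt'
  have h1 : Summable fun k => |co k| * t' ^ k := hsml t' ht'0 ht'1
  have h2 : Summable fun k : ℕ => (k : ℝ) ^ j * (t / t') ^ k :=
    summable_pow_mul_geometric_of_norm_lt_one j (by rwa [Real.norm_eq_abs])
  have h3 : Tendsto (fun k : ℕ => (k : ℝ) ^ j * (t / t') ^ k) atTop (𝓝 0) :=
    h2.tendsto_atTop_zero
  obtain ⟨M, hM⟩ := h3.bddAbove_range
  have hMb : ∀ k : ℕ, (k : ℝ) ^ j * (t / t') ^ k ≤ M := fun k => hM ⟨k, rfl⟩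
  refine Summable.of_nonneg_of_le (fun k => by positivity) (fun k => ?_) (h1.mul_left M)
  have key : (k : ℝ) ^ j * |co k| * t ^ k = ((k : ℝ) ^ j * (t / t') ^ k) * (|co k| * t' ^ k) := by
    rw [div_pow]
    field_simp
  rw [key]
  apply mul_le_mul_of_nonneg_right (hMb k) (by positivity)

/-- shifted, weighted summability at a point `|s| < 1`. -/
lemma sml_shift (co : ℕ → ℝ) (hsml : ∀ t : ℝ, 0 < t → t < 1 → Summable fun k : ℕ => |co k| * t ^ k)
    (d j : ℕ) {s : ℝ} (hs : |s| < 1) :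
    Summable fun k : ℕ => ((k : ℝ) + d) ^ j * |co (k + d)| * |s| ^ k := by
  set r : ℝ := (|s| + 1) / 2 with hrdef
  have hr0 : 0 < r := by positivity
  have hsr : |s| ≤ r := by rw [hrdef]; linarith
  have hr1 : r < 1 := by rw [hrdef]; linarith
  have h1 : Summable fun k : ℕ => ((k : ℝ) + d) ^ j * |co (k + d)| * r ^ (k + d) := by
    have := (summable_nat_add_iff (f := fun k : ℕ => (k : ℝ) ^ j * |co k| * r ^ k) d).2
      (upg co hsml j r hr0 hr1)
    refine this.congr fun k => ?_
    push_cast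
    ring
  have h2 : Summable fun k : ℕ => ((k : ℝ) + d) ^ j * |co (k + d)| * r ^ k := by
    have := h1.mul_right (r ^ d)⁻¹
    refine this.congr fun k => ?_
    rw [pow_add]
    field_simp
  apply Summable.of_nonneg_of_le (fun k => by positivity) _ h2
  intro k
  have : |s| ^ k ≤ r ^ k := pow_le_pow_left₀ (abs_nonneg s) hsr k
  have h0 : (0:ℝ) ≤ ((k : ℝ) + d) ^ j * |co (k + d)| := by positivity
  calc ((k : ℝ) + d) ^ j * |co (k + d)| * |s| ^ k
      ≤ ((k : ℝ) + d) ^ j * |co (k + d)| * r ^ k := by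
        exact mul_le_mul_of_nonneg_left this h0

section helpers
variable (co : ℕ → ℝ)
  (hsml : ∀ t : ℝ, 0 < t → t < 1 → Summable fun k : ℕ => |co k| * t ^ k)

include hsml in
lemma sml_pt {s : ℝ} (hs : |s| < 1) : Summable fun k : ℕ => co k * s ^ k := by
  have h := sml_shift co hsml 0 0 hs
  simp only [Nat.cast_zero, add_zero, pow_zero, one_mul, Nat.add_zero] at h
  apply Summable.of_norm_bounded h
  intro k
  rw [Real.norm_eq_abs, abs_mul, abs_pow]

include hsml in
lemma hasDerivAt_cosum {s : ℝ} (hs : |s| < 1) :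
    HasDerivAt (fun z : ℝ => ∑' k : ℕ, co k * z ^ k)
      (∑' k : ℕ, ((k : ℝ) + 1) * co (k + 1) * s ^ k) s := by
  set r : ℝ := (|s| + 1) / 2 with hrdef
  have hr0 : 0 < r := by positivity
  have hsr : |s| < r := by rw [hrdef]; linarith
  have hr1 : r < 1 := by rw [hrdef]; linarith
  have hmem : s ∈ Set.Ioo (-r) r := by
    constructor
    · linarith [neg_abs_le s]
    · linarith [le_abs_self s]
  have hbound : ∀ (k : ℕ) (y : ℝ), y ∈ Set.Ioo (-r) r →
      ‖co k * ((k : ℕ) * y ^ (k - 1))‖ ≤ (k : ℝ) * |co k| * r ^ k / r := by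
    intro k y hy
    have hyr : |y| ≤ r := by
      rw [abs_le]; exact ⟨hy.1.le, hy.2.le⟩
    match k with
    | 0 => simp
    | (m+1) =>
      rw [norm_mul, norm_mul, Real.norm_eq_abs, Real.norm_eq_abs, Real.norm_eq_abs]
      simp only [Nat.add_sub_cancel]
      rw [abs_pow, Nat.abs_cast]
      have h1 : |y| ^ m ≤ r ^ m := pow_le_pow_left₀ (abs_nonneg y) hyr m
      have he : ((m+1 : ℕ) : ℝ) * |co (m+1)| * r ^ (m+1) / r
          = |co (m+1)| * (((m+1 : ℕ) : ℝ) * r ^ m) := by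
        rw [pow_succ]
        field_simp
      rw [he]
      have : ((m:ℝ)+1) * |y| ^ m ≤ ((m:ℝ)+1) * r ^ m := by
        apply mul_le_mul_of_nonneg_left h1 (by positivity)
      push_cast
      calc |co (m+1)| * (((m:ℝ)+1) * |y| ^ m) ≤ |co (m+1)| * (((m:ℝ)+1) * r ^ m) := by
            apply mul_le_mul_of_nonneg_left this (abs_nonneg _)
        _ = _ := by ring
  have hu : Summable fun k : ℕ => (k : ℝ) * |co k| * r ^ k / r := by
    have := upg co hsml 1 r hr0 hr1
    simp only [pow_one] at this
    exact this.div_const r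
  have hD := hasDerivAt_tsum_of_isPreconnected hu (isOpen_Ioo (a := -r) (b := r))
    (isPreconnected_Ioo)
    (g := fun (k : ℕ) (z : ℝ) => co k * z ^ k)
    (g' := fun (k : ℕ) (y : ℝ) => co k * ((k : ℕ) * y ^ (k - 1)))
    (fun k y _ => (hasDerivAt_pow k y).const_mul (co k))
    (fun k y hy => hbound k y hy)
    (y₀ := 0) (by constructor <;> simp [hr0] <;> linarith)
    (by
      apply summable_of_ne_finset_zero (s := {0})
      intro k hk
      have : k ≠ 0 := by simpa using hk
      simp [zero_pow this])
    hmem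
  apply hD.congr_deriv
  have hsum : Summable fun k : ℕ => co k * ((k : ℕ) * s ^ (k - 1)) := by
    apply Summable.of_norm_bounded hu
    intro k; exact hbound k s hmem
  rw [Summable.tsum_eq_zero_add hsum]
  simp only [Nat.cast_zero, zero_mul, mul_zero, zero_add, Nat.add_sub_cancel]
  apply tsum_congr
  intro k
  push_cast
  ring
end helpers

section ode
variable (co : ℕ → ℝ)
  (hsml : ∀ t : ℝ, 0 < t → t < 1 → Summable fun k : ℕ => |co k| * t ^ k)

include hsml in
lemma sml_gen (d j : ℕ) (F : ℕ → ℝ) (hF : ∀ k, |F k| ≤ ((k : ℝ) + d) ^ j * |co (k + d)|)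
    {s : ℝ} (hs : |s| < 1) : Summable fun k : ℕ => F k * s ^ k := by
  apply Summable.of_norm_bounded (sml_shift co hsml d j hs)
  intro k
  rw [Real.norm_eq_abs, abs_mul, abs_pow]
  apply mul_le_mul_of_nonneg_right (hF k) (by positivity)

include hsml in
lemma ode_tsum (a b cc : ℝ)
    (hrec : ∀ k : ℕ, ((k : ℝ) + 1) * (cc + k) * co (k + 1) = (a + k) * (b + k) * co k)
    {s : ℝ} (hs : |s| < 1) :
    s * (1 - s) * (∑' k : ℕ, ((k : ℝ) + 2) * ((k : ℝ) + 1) * co (k + 2) * s ^ k)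
      + (cc - (a + b + 1) * s) * (∑' k : ℕ, ((k : ℝ) + 1) * co (k + 1) * s ^ k)
      - a * b * (∑' k : ℕ, co k * s ^ k) = 0 := by
  set q : ℕ → ℝ := fun k => ((k : ℝ) + 1) * (k : ℝ) * co (k + 1) * s ^ k with hq
  set p : ℕ → ℝ := fun k => (k : ℝ) * ((k : ℝ) - 1) * co k * s ^ k with hp
  set rr : ℕ → ℝ := fun k => (k : ℝ) * co k * s ^ k with hrr
  have S0 : Summable fun k : ℕ => co k * s ^ k := sml_pt co hsml hs
  have S1 : Summable fun k : ℕ => ((k : ℝ) + 1) * co (k + 1) * s ^ k := by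
    apply sml_gen co hsml 1 1 _ _ hs
    intro k
    rw [abs_mul, Nat.cast_one]
    have : |(k : ℝ) + 1| = (k : ℝ) + 1 := abs_of_pos (by positivity)
    rw [this, pow_one]
  have S2 : Summable fun k : ℕ => ((k : ℝ) + 2) * ((k : ℝ) + 1) * co (k + 2) * s ^ k := by
    apply sml_gen co hsml 2 2 _ _ hs
    intro k
    rw [abs_mul, abs_mul, Nat.cast_two]
    rw [abs_of_pos (show (0:ℝ) < (k:ℝ)+2 by positivity), abs_of_pos (show (0:ℝ) < (k:ℝ)+1 by positivity)]
    have h1 : (k : ℝ) + 1 ≤ (k : ℝ) + 2 := by linarith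
    nlinarith [abs_nonneg (co (k+2)), sq_nonneg ((k:ℝ)+2)]
  have Sq : Summable q := by
    apply sml_gen co hsml 1 2 _ _ hs
    intro k
    rw [abs_mul, abs_mul, Nat.cast_one]
    rw [abs_of_pos (show (0:ℝ) < (k:ℝ)+1 by positivity), Nat.abs_cast]
    nlinarith [abs_nonneg (co (k+1)), Nat.cast_nonneg (α := ℝ) k]
  have Sp : Summable p := by
    apply sml_gen co hsml 0 2 _ _ hs
    intro k
    rw [abs_mul, abs_mul, Nat.abs_cast, Nat.cast_zero, add_zero]
    match k with
    | 0 => simp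
    | (m+1) =>
      have : |(((m+1:ℕ)) : ℝ) - 1| = ((m+1:ℕ) : ℝ) - 1 := by
        rw [abs_of_nonneg]; push_cast; linarith
      rw [this]
      have hm : ((m+1:ℕ) : ℝ) - 1 ≤ ((m+1:ℕ):ℝ) := by linarith
      nlinarith [abs_nonneg (co (m+1)), Nat.cast_nonneg (α := ℝ) (m+1)]
  have Sp1 : Summable fun k => p (k + 1) := (summable_nat_add_iff 1).2 Sp
  have Sr : Summable rr := by
    apply sml_gen co hsml 0 1 _ _ hs
    intro k
    rw [abs_mul, Nat.abs_cast, Nat.cast_zero, add_zero, pow_one, Nat.add_zero]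
  set D2v := ∑' k : ℕ, ((k : ℝ) + 2) * ((k : ℝ) + 1) * co (k + 2) * s ^ k with hD2v
  set D1v := ∑' k : ℕ, ((k : ℝ) + 1) * co (k + 1) * s ^ k with hD1v
  set D0v := ∑' k : ℕ, co k * s ^ k with hD0v
  have e1 : s * D2v = ∑' k, q k := by
    calc s * D2v = ∑' k : ℕ, q (k + 1) := by
          rw [hD2v, ← tsum_mul_left]
          exact tsum_congr fun k => by rw [hq]; push_cast; ring
      _ = ∑' k, q k := by
          rw [Summable.tsum_eq_zero_add Sq]
          have : q 0 = 0 := by rw [hq]; norm_num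
          rw [this, zero_add]
  have e2 : s ^ 2 * D2v = ∑' k, p k := by
    calc s ^ 2 * D2v = ∑' k : ℕ, p (k + 2) := by
          rw [hD2v, ← tsum_mul_left]
          exact tsum_congr fun k => by rw [hp]; push_cast; ring
      _ = ∑' k, p k := by
          rw [Summable.tsum_eq_zero_add Sp, Summable.tsum_eq_zero_add Sp1]
          have h0 : p 0 = 0 := by rw [hp]; norm_num
          have h1 : p 1 = 0 := by rw [hp]; norm_num
          rw [h0, h1, zero_add, zero_add]
  have e3 : s * D1v = ∑' k, rr k := by
    calc s * D1v = ∑' k : ℕ, rr (k + 1) := by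
          rw [hD1v, ← tsum_mul_left]
          exact tsum_congr fun k => by rw [hrr]; push_cast; ring
      _ = ∑' k, rr k := by
          rw [Summable.tsum_eq_zero_add Sr]
          have : rr 0 = 0 := by rw [hrr]; norm_num
          rw [this, zero_add]
  have e4 : cc * D1v = ∑' k : ℕ, cc * (((k : ℝ) + 1) * co (k + 1) * s ^ k) := by
    rw [hD1v, tsum_mul_left]
  have e5 : a * b * D0v = ∑' k : ℕ, a * b * (co k * s ^ k) := by
    rw [hD0v, tsum_mul_left]
  have e6 : (a + b + 1) * (∑' k, rr k) = ∑' k : ℕ, (a + b + 1) * rr k := by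
    rw [tsum_mul_left]
  have expand : s * (1 - s) * D2v + (cc - (a + b + 1) * s) * D1v - a * b * D0v
      = s * D2v - s ^ 2 * D2v + cc * D1v - (a + b + 1) * (s * D1v) - a * b * D0v := by ring
  rw [expand, e1, e2, e3, e4, e5, e6]
  have SccT1 := S1.mul_left cc
  have SabT0 := S0.mul_left (a * b)
  have Srr' := Sr.mul_left (a + b + 1)
  rw [← Summable.tsum_sub Sq Sp, ← Summable.tsum_add (Sq.sub Sp) SccT1,
    ← Summable.tsum_sub ((Sq.sub Sp).add SccT1) Srr',
    ← Summable.tsum_sub (((Sq.sub Sp).add SccT1).sub Srr') SabT0]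
  have : ∀ k : ℕ, q k - p k + cc * (((k : ℝ) + 1) * co (k + 1) * s ^ k)
      - (a + b + 1) * rr k - a * b * (co k * s ^ k) = 0 := by
    intro k
    rw [hq, hp, hrr]
    linear_combination s ^ k * hrec k
  calc ∑' k, (q k - p k + cc * (((k : ℝ) + 1) * co (k + 1) * s ^ k)
      - (a + b + 1) * rr k - a * b * (co k * s ^ k)) = ∑' _k : ℕ, (0:ℝ) := tsum_congr this
    _ = 0 := tsum_zero
end ode



lemma poch_succ (a : ℝ) (k : ℕ) : poch a (k + 1) = poch a k * (a + k) :=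
  Finset.prod_range_succ _ _

lemma poch_pos {a : ℝ} (ha : 0 < a) (k : ℕ) : 0 < poch a k :=
  Finset.prod_pos fun j _ => by positivity

lemma hrec_poch (a b cc : ℝ) (hcc : 0 < cc) (k : ℕ) :
    ((k : ℝ) + 1) * (cc + k) * (poch a (k + 1) * poch b (k + 1) /
        (poch cc (k + 1) * ((Nat.factorial (k + 1)) : ℝ)))
      = (a + k) * (b + k) * (poch a k * poch b k / (poch cc k * ((Nat.factorial k) : ℝ))) := by
  have h1 : poch cc k ≠ 0 := (poch_pos hcc k).ne'
  have h2 : cc + (k : ℝ) ≠ 0 := by positivity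
  have h3 : ((Nat.factorial k : ℝ)) ≠ 0 := by
    exact_mod_cast (Nat.factorial_pos k).ne'
  rw [poch_succ, poch_succ, poch_succ, Nat.factorial_succ]
  push_cast
  field_simp

lemma hsml_ratio (a b cc : ℝ) (ha : 0 < a) (hb : 0 < b) (hcc : 0 < cc) :
    ∀ t : ℝ, 0 < t → t < 1 →
      Summable fun k : ℕ => |poch a k * poch b k / (poch cc k * ((Nat.factorial k) : ℝ))| * t ^ k := by
  intro t ht ht1
  set co : ℕ → ℝ := fun k => poch a k * poch b k / (poch cc k * ((Nat.factorial k) : ℝ)) with hco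
  have hcop : ∀ k, 0 < co k := fun k => by
    rw [hco]
    have := poch_pos ha k; have := poch_pos hb k; have := poch_pos hcc k
    have := Nat.factorial_pos k
    positivity
  set r : ℝ := (t + 1) / 2 with hrdef
  have hr1 : r < 1 := by rw [hrdef]; linarith
  have htr : t < r := by rw [hrdef]; linarith
  have hrt : 1 < r / t := (one_lt_div ht).2 htr
  -- ratio tendsto 1
  have hten : Tendsto (fun k : ℕ => ((a + k) / ((k : ℝ) + 1)) * ((b + k) / (cc + k)))
      atTop (𝓝 1) := by
    have p1 : Tendsto (fun k : ℕ => (a + k) / ((k : ℝ) + 1)) atTop (𝓝 1) := by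
      have he : (fun k : ℕ => (a + k) / ((k : ℝ) + 1))
          = fun k : ℕ => 1 + (a - 1) * (1 / ((k : ℝ) + 1)) := by
        funext k
        have : ((k : ℝ) + 1) ≠ 0 := by positivity
        field_simp
        ring
      rw [he]
      have := (tendsto_one_div_add_atTop_nhds_zero_nat).const_mul (a - 1)
      simpa using (tendsto_const_nhds (x := (1:ℝ))).add this
    have p2 : Tendsto (fun k : ℕ => (b + k) / (cc + k)) atTop (𝓝 1) := by
      have hz : Tendsto (fun k : ℕ => (cc + (k:ℝ))) atTop atTop :=
        tendsto_atTop_add_const_left _ cc tendsto_natCast_atTop_atTop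
      have hinv : Tendsto (fun k : ℕ => (cc + (k:ℝ))⁻¹) atTop (𝓝 0) :=
        tendsto_inv_atTop_zero.comp hz
      have he : ∀ᶠ k : ℕ in atTop, (b + k) / (cc + k) = 1 + (b - cc) * (cc + (k:ℝ))⁻¹ := by
        filter_upwards [eventually_gt_atTop 0] with k _
        have : (cc + (k : ℝ)) ≠ 0 := by positivity
        field_simp
        ring
      rw [tendsto_congr' he]
      have := hinv.const_mul (b - cc)
      simpa using (tendsto_const_nhds (x := (1:ℝ))).add this
    simpa using p1.mul p2
  have hev : ∀ᶠ k : ℕ in atTop,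
      ((a + k) / ((k : ℝ) + 1)) * ((b + k) / (cc + k)) < r / t :=
    hten.eventually_lt_const hrt
  apply summable_of_ratio_norm_eventually_le hr1
  filter_upwards [hev] with k hk
  have hck : (0:ℝ) < cc + k := by positivity
  have hk1 : (0:ℝ) < (k : ℝ) + 1 := by positivity
  have hrec' : ((k : ℝ) + 1) * (cc + k) * co (k + 1) = (a + k) * (b + k) * co k := by
    simp only [hco]
    exact hrec_poch a b cc hcc k
  rw [div_mul_div_comm, div_lt_div_iff₀ (by positivity) ht] at hk
  have hnorm : ∀ m : ℕ, ‖|co m| * t ^ m‖ = co m * t ^ m := by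
    intro m
    rw [Real.norm_eq_abs, abs_mul, abs_abs, abs_pow, abs_of_pos ht, abs_of_pos (hcop m)]
  rw [hnorm, hnorm]
  have key : (((k:ℝ)+1)*(cc+k)) * (co (k+1) * t^(k+1)) ≤ (((k:ℝ)+1)*(cc+k)) * (r * (co k * t^k)) := by
    have e : (((k:ℝ)+1)*(cc+k)) * (co (k+1) * t^(k+1)) = (co k * t^k) * ((a+k)*(b+k)*t) := by
      rw [pow_succ]
      linear_combination (t ^ k * t) * hrec'
    rw [e]
    calc (co k * t^k) * ((a+k)*(b+k)*t) ≤ (co k * t^k) * (r*(((k:ℝ)+1)*(cc+k))) :=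
          mul_le_mul_of_nonneg_left hk.le (mul_nonneg (hcop k).le (by positivity))
      _ = (((k:ℝ)+1)*(cc+k)) * (r * (co k * t^k)) := by ring
  exact le_of_mul_le_mul_left key (by positivity)


lemma alg1 (α β a b E S C G G1 G2 : ℝ) (hab : a + b = α + β)
    (hE : E = ((a + b) ^ 2 - 4 * (a * b)) / 2)
    (hpy : S ^ 2 + C ^ 2 = 1)
    (hODE : S ^ 2 * (1 - S ^ 2) * G2 + ((α + 1 / 2) - (a + b + 1) * S ^ 2) * G1
      - a * b * G = 0) :
    (α - 1) * C ^ 2 * (α * C ^ 2 * G - β * S ^ 2 * G + 2 * S ^ 2 * C ^ 2 * G1)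
      - (β - 1) * S ^ 2 * (α * C ^ 2 * G - β * S ^ 2 * G + 2 * S ^ 2 * C ^ 2 * G1)
      + 2 * S ^ 2 * C ^ 2 * (-(α + β) * G + (α * C ^ 2 - β * S ^ 2 + 2 * C ^ 2 - 2 * S ^ 2) * G1
          + 2 * S ^ 2 * C ^ 2 * G2)
      = (α * (α - 1) * C ^ 2 + β * (β - 1) * S ^ 2 - 2 * E * S ^ 2 * C ^ 2) * G := by
  have hb : b = α + β - a := by linarith
  subst hb
  subst hE
  linear_combination (4 * S ^ 2 * C ^ 2) * hODE +
    (2 * S ^ 2 * C ^ 2 * G1 + 4 * S ^ 4 * C ^ 2 * G2 - β * S ^ 2 * G + β ^ 2 * S ^ 2 * G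
      - α * C ^ 2 * G + 4 * α * S ^ 2 * C ^ 2 * G1 + α ^ 2 * C ^ 2 * G) * hpy

lemma wlayer (α β a b E : ℝ) (hab : a + b = α + β)
    (hE : E = ((a + b) ^ 2 - 4 * (a * b)) / 2)
    (G G1 G2 : ℝ → ℝ)
    (hG : ∀ s ∈ Set.Ioo (-1 : ℝ) 1, HasDerivAt G (G1 s) s)
    (hG1 : ∀ s ∈ Set.Ioo (-1 : ℝ) 1, HasDerivAt G1 (G2 s) s)
    (hODE : ∀ s ∈ Set.Ioo (-1 : ℝ) 1,
      s * (1 - s) * G2 s + ((α + 1 / 2) - (a + b + 1) * s) * G1 s - a * b * G s = 0)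
    {x : ℝ} (hx : x ∈ Set.Ioo (0 : ℝ) (Real.pi / 2)) :
    HasDerivAt (fun y => Real.sin y ^ α * Real.cos y ^ β * G (Real.sin y ^ 2))
      (Real.sin x ^ (α - 1) * Real.cos x ^ (β - 1) *
        (α * Real.cos x ^ 2 * G (Real.sin x ^ 2) - β * Real.sin x ^ 2 * G (Real.sin x ^ 2)
          + 2 * Real.sin x ^ 2 * Real.cos x ^ 2 * G1 (Real.sin x ^ 2))) x ∧
    HasDerivAt (fun y => Real.sin y ^ (α - 1) * Real.cos y ^ (β - 1) *
        (α * Real.cos y ^ 2 * G (Real.sin y ^ 2) - β * Real.sin y ^ 2 * G (Real.sin y ^ 2)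
          + 2 * Real.sin y ^ 2 * Real.cos y ^ 2 * G1 (Real.sin y ^ 2)))
      (2 * (α * (α - 1) / (2 * Real.sin x ^ 2) + β * (β - 1) / (2 * Real.cos x ^ 2) - E) *
        (Real.sin x ^ α * Real.cos x ^ β * G (Real.sin x ^ 2))) x := by
  obtain ⟨hx0, hx2⟩ := hx
  have hpi := Real.pi_pos
  have hS : 0 < Real.sin x := Real.sin_pos_of_pos_of_lt_pi hx0 (by linarith)
  have hC : 0 < Real.cos x := Real.cos_pos_of_mem_Ioo ⟨by linarith, hx2⟩
  have hS1 : Real.sin x < 1 := by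
    have := Real.strictMonoOn_sin (by constructor <;> [linarith; linarith])
      (by constructor <;> [linarith; linarith]) hx2
    simpa using this
  set S := Real.sin x with hSdef
  set C := Real.cos x with hCdef
  have hs : S ^ 2 ∈ Set.Ioo (-1 : ℝ) 1 := by
    constructor
    · nlinarith
    · nlinarith
  have hpy : S ^ 2 + C ^ 2 = 1 := Real.sin_sq_add_cos_sq x
  have hsin : HasDerivAt Real.sin C x := Real.hasDerivAt_sin x
  have hcos : HasDerivAt Real.cos (-S) x := Real.hasDerivAt_cos x
  have hs2 : HasDerivAt (fun y => Real.sin y ^ 2) ((2 : ℕ) * Real.sin x ^ (2 - 1) * C) x :=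
    hsin.pow 2
  have hc2 : HasDerivAt (fun y => Real.cos y ^ 2) ((2 : ℕ) * Real.cos x ^ (2 - 1) * (-S)) x :=
    hcos.pow 2
  have hGc : HasDerivAt (fun y => G (Real.sin y ^ 2))
      (G1 (S ^ 2) * ((2 : ℕ) * Real.sin x ^ (2 - 1) * C)) x :=
    (hG _ hs).comp x hs2
  have hG1c : HasDerivAt (fun y => G1 (Real.sin y ^ 2))
      (G2 (S ^ 2) * ((2 : ℕ) * Real.sin x ^ (2 - 1) * C)) x :=
    (hG1 _ hs).comp x hs2
  have hsa : HasDerivAt (fun y => Real.sin y ^ α) (C * α * S ^ (α - 1)) x :=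
    hsin.rpow_const (Or.inl hS.ne')
  have hcb : HasDerivAt (fun y => Real.cos y ^ β) ((-S) * β * C ^ (β - 1)) x :=
    hcos.rpow_const (Or.inl hC.ne')
  have hsa1 : HasDerivAt (fun y => Real.sin y ^ (α - 1)) (C * (α - 1) * S ^ (α - 1 - 1)) x :=
    hsin.rpow_const (Or.inl hS.ne')
  have hcb1 : HasDerivAt (fun y => Real.cos y ^ (β - 1)) ((-S) * (β - 1) * C ^ (β - 1 - 1)) x :=
    hcos.rpow_const (Or.inl hC.ne')
  have hSa : S ^ α = S ^ (α - 1) * S := by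
    have h := Real.rpow_add_one hS.ne' (α - 1)
    rw [show α - 1 + 1 = α by ring] at h
    exact h
  have hCb : C ^ β = C ^ (β - 1) * C := by
    have h := Real.rpow_add_one hC.ne' (β - 1)
    rw [show β - 1 + 1 = β by ring] at h
    exact h
  have hSa1 : S ^ (α - 1) = S ^ (α - 1 - 1) * S := by
    have h := Real.rpow_add_one hS.ne' (α - 1 - 1)
    rw [show α - 1 - 1 + 1 = α - 1 by ring] at h
    exact h
  have hCb1 : C ^ (β - 1) = C ^ (β - 1 - 1) * C := by
    have h := Real.rpow_add_one hC.ne' (β - 1 - 1)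
    rw [show β - 1 - 1 + 1 = β - 1 by ring] at h
    exact h
  constructor
  · have h1 := (hsa.mul hcb).mul hGc
    refine h1.congr_deriv (Eq.symm ?_)
    simp only [Pi.mul_apply, Pi.neg_apply, Pi.pow_apply, Pi.add_apply, Pi.sub_apply, Pi.div_apply, ← hSdef, ← hCdef]
    rw [hSa, hCb, hSa1, hCb1]
    push_cast
    ring
  · have hA : HasDerivAt (fun y => α * Real.cos y ^ 2 * G (Real.sin y ^ 2)
        - β * Real.sin y ^ 2 * G (Real.sin y ^ 2)
        + 2 * Real.sin y ^ 2 * Real.cos y ^ 2 * G1 (Real.sin y ^ 2))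
        ((α * ((2 : ℕ) * Real.cos x ^ (2 - 1) * (-S))) * G (S ^ 2)
          + (α * C ^ 2) * (G1 (S ^ 2) * ((2 : ℕ) * Real.sin x ^ (2 - 1) * C))
          - ((β * ((2 : ℕ) * Real.sin x ^ (2 - 1) * C)) * G (S ^ 2)
            + (β * S ^ 2) * (G1 (S ^ 2) * ((2 : ℕ) * Real.sin x ^ (2 - 1) * C)))
          + (((2 * ((2 : ℕ) * Real.sin x ^ (2 - 1) * C)) * C ^ 2
              + (2 * S ^ 2) * ((2 : ℕ) * Real.cos x ^ (2 - 1) * (-S))) * G1 (S ^ 2)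
            + (2 * S ^ 2 * C ^ 2) * (G2 (S ^ 2) * ((2 : ℕ) * Real.sin x ^ (2 - 1) * C)))) x := by
      exact (((hc2.const_mul α).mul hGc).sub ((hs2.const_mul β).mul hGc)).add
        (((hs2.const_mul 2).mul hc2).mul hG1c)
    have h2 := (hsa1.mul hcb1).mul hA
    refine h2.congr_deriv (Eq.symm ?_)
    simp only [Pi.mul_apply, Pi.neg_apply, Pi.pow_apply, Pi.add_apply, Pi.sub_apply, Pi.div_apply, ← hSdef, ← hCdef]
    have halg := alg1 α β a b E S C (G (S ^ 2)) (G1 (S ^ 2)) (G2 (S ^ 2)) hab hE hpy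
      (hODE (S ^ 2) hs)
    have hSne : S ≠ 0 := hS.ne'
    have hCne : C ≠ 0 := hC.ne'
    trans (S ^ (α - 1 - 1) * C ^ (β - 1 - 1)) *
      ((α * (α - 1) * C ^ 2 + β * (β - 1) * S ^ 2 - 2 * E * S ^ 2 * C ^ 2) * G (S ^ 2))
    · rw [hSa, hCb, hSa1, hCb1]
      field_simp
    · rw [← halg, hSa1, hCb1]
      push_cast
      ring

section
variable (co : ℕ → ℝ)
  (hsml : ∀ t : ℝ, 0 < t → t < 1 → Summable fun k : ℕ => |co k| * t ^ k)

include hsml in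
lemma Gpack (a b cc : ℝ)
    (hrec : ∀ k : ℕ, ((k : ℝ) + 1) * (cc + k) * co (k + 1) = (a + k) * (b + k) * co k) :
    (∀ s ∈ Set.Ioo (-1 : ℝ) 1, HasDerivAt (fun z : ℝ => ∑' k : ℕ, co k * z ^ k)
        ((fun z : ℝ => ∑' k : ℕ, ((k : ℝ) + 1) * co (k + 1) * z ^ k) s) s) ∧
    (∀ s ∈ Set.Ioo (-1 : ℝ) 1,
      HasDerivAt (fun z : ℝ => ∑' k : ℕ, ((k : ℝ) + 1) * co (k + 1) * z ^ k)
        ((fun z : ℝ => ∑' k : ℕ, ((k : ℝ) + 2) * ((k : ℝ) + 1) * co (k + 2) * z ^ k) s) s) ∧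
    (∀ s ∈ Set.Ioo (-1 : ℝ) 1,
      s * (1 - s) * ((fun z : ℝ => ∑' k : ℕ, ((k : ℝ) + 2) * ((k : ℝ) + 1) * co (k + 2) * z ^ k) s)
        + (cc - (a + b + 1) * s) *
          ((fun z : ℝ => ∑' k : ℕ, ((k : ℝ) + 1) * co (k + 1) * z ^ k) s)
        - a * b * ((fun z : ℝ => ∑' k : ℕ, co k * z ^ k) s) = 0) := by
  have hsml' : ∀ t : ℝ, 0 < t → t < 1 →
      Summable fun k : ℕ => |((k : ℝ) + 1) * co (k + 1)| * t ^ k := by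
    intro t ht ht1
    have h := sml_shift co hsml 1 1 (s := t) (by rw [abs_of_pos ht]; exact ht1)
    rw [abs_of_pos ht] at h
    refine h.congr fun k => ?_
    rw [abs_mul, Nat.cast_one, pow_one, abs_of_pos (show (0:ℝ) < (k:ℝ)+1 by positivity)]
  refine ⟨fun s hs => hasDerivAt_cosum co hsml (abs_lt.2 ⟨hs.1, hs.2⟩), fun s hs => ?_,
    fun s hs => ode_tsum co hsml a b cc hrec (abs_lt.2 ⟨hs.1, hs.2⟩)⟩
  have h := hasDerivAt_cosum (fun k => ((k : ℝ) + 1) * co (k + 1)) hsml'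
    (abs_lt.2 ⟨hs.1, hs.2⟩)
  have hfun : (fun z : ℝ => ∑' k : ℕ, ((k : ℝ) + 1) * co (k + 1) * z ^ k)
      = fun z : ℝ => ∑' k : ℕ, (fun k : ℕ => ((k : ℝ) + 1) * co (k + 1)) k * z ^ k := rfl
  rw [hfun]
  convert h using 1
  refine tsum_congr fun k => ?_
  push_cast
  ring
end

set_option maxHeartbeats 1000000 in
/-- the first-order SUSY partners of the Pöschl–Teller Hamiltonian.
With `u_ε(x) = sin^α x cos^β x ₂F₁(γ/2+√(ε/2), γ/2-√(ε/2); α+½; sin²x) > 0`,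
`v_ε(x) = cos^{2β-1}x ₂F₁(γ/2+√(ε/2), γ/2-√(ε/2); α+½; sin²x)`,
`V₁ = α(α+1)/(2sin²x) + (β-2)(β-1)/(2cos²x) - (log v_ε)''` and `κ = (log u_ε)'`,
the functions `φ_n = (-ψ_{0,n}' + κψ_{0,n})/√2` satisfy `-½φ_n'' + V₁φ_n = E_nφ_n`
on `(0, π/2)`, where `E_n = ½(2n+γ)²`. -/
theorem statement13 (α β : ℝ) (hα : 1 < α) (hβ : 2 < β) (γ : ℝ) (hγ : γ = α + β)
    (ε : ℝ) (hε0 : 0 ≤ ε) (hεE : ε < γ ^ 2 / 2)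
    (uε vε : ℝ → ℝ)
    (huε : uε = fun x : ℝ => Real.sin x ^ α * Real.cos x ^ β *
      hyp2F1 (γ / 2 + Real.sqrt (ε / 2)) (γ / 2 - Real.sqrt (ε / 2)) (α + 1 / 2)
        (Real.sin x ^ 2))
    (hvε : vε = fun x : ℝ => Real.cos x ^ (2 * β - 1) *
      hyp2F1 (γ / 2 + Real.sqrt (ε / 2)) (γ / 2 - Real.sqrt (ε / 2)) (α + 1 / 2)
        (Real.sin x ^ 2))
    (hupos : ∀ x ∈ Set.Ioo (0 : ℝ) (Real.pi / 2), 0 < uε x)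
    (V₁ : ℝ → ℝ)
    (hV₁ : V₁ = fun x : ℝ => α * (α + 1) / (2 * Real.sin x ^ 2) +
      (β - 2) * (β - 1) / (2 * Real.cos x ^ 2) -
      deriv (deriv fun y : ℝ => Real.log (vε y)) x)
    (κ : ℝ → ℝ) (hκ : κ = fun x : ℝ => deriv (fun y : ℝ => Real.log (uε y)) x) :
    ∀ n : ℕ, ∀ φ : ℝ → ℝ,
      φ = (fun x : ℝ =>
        (-(deriv (PTeigenfun α β n) x) + κ x * PTeigenfun α β n x) / Real.sqrt 2) →
      ∀ x ∈ Set.Ioo (0 : ℝ) (Real.pi / 2),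
        -(1 / 2) * deriv (deriv φ) x + V₁ x * φ x
          = 1 / 2 * (2 * (n : ℝ) + γ) ^ 2 * φ x := by
  intro n φ hφ x hx
  have hπ := Real.pi_pos
  have hγ3 : 3 < γ := by rw [hγ]; linarith
  set aU := γ / 2 + Real.sqrt (ε / 2) with haUdef
  set bU := γ / 2 - Real.sqrt (ε / 2) with hbUdef
  have hsqε : Real.sqrt (ε / 2) ^ 2 = ε / 2 := Real.sq_sqrt (by linarith)
  have haU : 0 < aU := by
    rw [haUdef]; have := Real.sqrt_nonneg (ε / 2); linarith
  have hbU : 0 < bU := by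
    rw [hbUdef]
    have h2 : Real.sqrt (ε / 2) < γ / 2 := by
      rw [show γ / 2 = Real.sqrt ((γ / 2) ^ 2) from (Real.sqrt_sq (by linarith)).symm]
      apply Real.sqrt_lt_sqrt (by linarith)
      nlinarith
    linarith
  have hcc : (0 : ℝ) < α + 1 / 2 := by linarith
  have habU : aU + bU = α + β := by rw [haUdef, hbUdef]; linarith
  have hEU : ε = ((aU + bU) ^ 2 - 4 * (aU * bU)) / 2 := by
    rw [haUdef, hbUdef]
    linear_combination (-2 : ℝ) * hsqε
  set co_u : ℕ → ℝ :=
    fun k => poch aU k * poch bU k / (poch (α + 1 / 2) k * ((Nat.factorial k) : ℝ)) with hco_u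
  have hsml_u : ∀ t : ℝ, 0 < t → t < 1 → Summable fun k : ℕ => |co_u k| * t ^ k :=
    fun t ht ht1 => hsml_ratio aU bU (α + 1 / 2) haU hbU hcc t ht ht1
  have hrec_u : ∀ k : ℕ, ((k : ℝ) + 1) * ((α + 1 / 2) + k) * co_u (k + 1)
      = (aU + k) * (bU + k) * co_u k := fun k => hrec_poch aU bU (α + 1 / 2) hcc k
  obtain ⟨hGu, hG1u, hODEu⟩ := Gpack co_u hsml_u aU bU (α + 1 / 2) hrec_u
  set G1u : ℝ → ℝ := fun z => ∑' k : ℕ, ((k : ℝ) + 1) * co_u (k + 1) * z ^ k with hG1udef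
  have hfoldu : hyp2F1 aU bU (α + 1 / 2) = (fun z : ℝ => ∑' k : ℕ, co_u k * z ^ k) := rfl
  have hGu' : ∀ s ∈ Set.Ioo (-1 : ℝ) 1, HasDerivAt (hyp2F1 aU bU (α + 1 / 2)) (G1u s) s := by
    rw [hfoldu]; exact hGu
  set co_p : ℕ → ℝ := fun k => poch (-(n : ℝ)) k * poch ((n : ℝ) + (α + β)) k /
    (poch (α + 1 / 2) k * ((Nat.factorial k) : ℝ)) with hco_p
  have hvan : ∀ k : ℕ, k ∉ Finset.range (n + 1) → co_p k = 0 := by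
    intro k hk
    rw [Finset.mem_range, not_lt] at hk
    have hz : poch (-(n : ℝ)) k = 0 := by
      rw [poch]
      apply Finset.prod_eq_zero (Finset.mem_range.mpr (by omega : n < k))
      simp
    rw [hco_p]
    simp [hz]
  have hsml_p : ∀ t : ℝ, 0 < t → t < 1 → Summable fun k : ℕ => |co_p k| * t ^ k := by
    intro t ht ht1
    apply summable_of_ne_finset_zero (s := Finset.range (n + 1))
    intro k hk
    rw [hvan k hk]
    simp
  have hrec_p : ∀ k : ℕ, ((k : ℝ) + 1) * ((α + 1 / 2) + k) * co_p (k + 1)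
      = ((-(n : ℝ)) + k) * (((n : ℝ) + (α + β)) + k) * co_p k :=
    fun k => hrec_poch (-(n : ℝ)) ((n : ℝ) + (α + β)) (α + 1 / 2) hcc k
  obtain ⟨hGp, hG1p, hODEp⟩ :=
    Gpack co_p hsml_p (-(n : ℝ)) ((n : ℝ) + (α + β)) (α + 1 / 2) hrec_p
  set Pp : ℝ → ℝ := fun z => ∑' k : ℕ, co_p k * z ^ k with hPpdef
  set P1p : ℝ → ℝ := fun z => ∑' k : ℕ, ((k : ℝ) + 1) * co_p (k + 1) * z ^ k with hP1pdef
  have habP : (-(n : ℝ)) + ((n : ℝ) + (α + β)) = α + β := by ring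
  set Eψ := 1 / 2 * (2 * (n : ℝ) + γ) ^ 2 with hEψdef
  have hEP : Eψ = (((-(n : ℝ)) + ((n : ℝ) + (α + β))) ^ 2
      - 4 * ((-(n : ℝ)) * ((n : ℝ) + (α + β)))) / 2 := by
    rw [hEψdef, hγ]; ring
  set Nc := Real.sqrt (2 * (2 * (n : ℝ) + (α + β)) * Real.Gamma ((n : ℝ) + (α + β)) *
      poch (α + 1 / 2) n / ((Nat.factorial n : ℝ) * Real.Gamma (α + 1 / 2) *
        Real.Gamma (β + 1 / 2) * poch (β + 1 / 2) n)) with hNcdef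
  set wp : ℝ → ℝ := fun y => Real.sin y ^ α * Real.cos y ^ β * Pp (Real.sin y ^ 2) with hwpdef
  set w1p : ℝ → ℝ := fun y => Real.sin y ^ (α - 1) * Real.cos y ^ (β - 1) *
    (α * Real.cos y ^ 2 * Pp (Real.sin y ^ 2) - β * Real.sin y ^ 2 * Pp (Real.sin y ^ 2)
      + 2 * Real.sin y ^ 2 * Real.cos y ^ 2 * P1p (Real.sin y ^ 2)) with hw1pdef
  set u1f : ℝ → ℝ := fun y => Real.sin y ^ (α - 1) * Real.cos y ^ (β - 1) *
    (α * Real.cos y ^ 2 * hyp2F1 aU bU (α + 1 / 2) (Real.sin y ^ 2)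
      - β * Real.sin y ^ 2 * hyp2F1 aU bU (α + 1 / 2) (Real.sin y ^ 2)
      + 2 * Real.sin y ^ 2 * Real.cos y ^ 2 * G1u (Real.sin y ^ 2)) with hu1fdef
  have hueq : ∀ y : ℝ, uε y = Real.sin y ^ α * Real.cos y ^ β *
      hyp2F1 aU bU (α + 1 / 2) (Real.sin y ^ 2) := fun y => by rw [huε]
  have hψeq : PTeigenfun α β n = fun y => Nc * wp y := by
    funext y
    have hfin : Pp (Real.sin y ^ 2) = ∑ m ∈ Finset.range (n + 1),
        co_p m * Real.sin y ^ (2 * m) := by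
      rw [hPpdef]
      beta_reduce
      rw [tsum_eq_sum (s := Finset.range (n + 1)) (fun k hk => by rw [hvan k hk]; ring)]
      exact Finset.sum_congr rfl fun m _ => by rw [pow_mul]
    beta_reduce
    rw [hwpdef]
    beta_reduce
    rw [hfin]
    unfold PTeigenfun
    rw [← hNcdef]
    simp only [hco_p]
    ring
  have hwU : ∀ y ∈ Set.Ioo (0 : ℝ) (Real.pi / 2), HasDerivAt uε (u1f y) y := by
    intro y hy
    have h := (wlayer α β aU bU ε habU hEU (hyp2F1 aU bU (α + 1 / 2)) G1u
      (fun z => ∑' k : ℕ, ((k : ℝ) + 2) * ((k : ℝ) + 1) * co_u (k + 2) * z ^ k)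
      hGu' hG1u hODEu hy).1
    rw [← huε] at h
    exact h
  have hw1U : ∀ y ∈ Set.Ioo (0 : ℝ) (Real.pi / 2), HasDerivAt u1f
      (2 * (α * (α - 1) / (2 * Real.sin y ^ 2) + β * (β - 1) / (2 * Real.cos y ^ 2) - ε)
        * uε y) y := by
    intro y hy
    have h := (wlayer α β aU bU ε habU hEU (hyp2F1 aU bU (α + 1 / 2)) G1u
      (fun z => ∑' k : ℕ, ((k : ℝ) + 2) * ((k : ℝ) + 1) * co_u (k + 2) * z ^ k)
      hGu' hG1u hODEu hy).2
    rw [← hueq y] at h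
    exact h
  clear_value G1u u1f
  have hwP : ∀ y ∈ Set.Ioo (0 : ℝ) (Real.pi / 2), HasDerivAt wp (w1p y) y := by
    intro y hy
    exact (wlayer α β (-(n : ℝ)) ((n : ℝ) + (α + β)) Eψ habP hEP Pp P1p
      (fun z => ∑' k : ℕ, ((k : ℝ) + 2) * ((k : ℝ) + 1) * co_p (k + 2) * z ^ k)
      hGp hG1p hODEp hy).1
  have hw1P : ∀ y ∈ Set.Ioo (0 : ℝ) (Real.pi / 2), HasDerivAt w1p
      (2 * (α * (α - 1) / (2 * Real.sin y ^ 2) + β * (β - 1) / (2 * Real.cos y ^ 2) - Eψ)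
        * wp y) y := by
    intro y hy
    exact (wlayer α β (-(n : ℝ)) ((n : ℝ) + (α + β)) Eψ habP hEP Pp P1p
      (fun z => ∑' k : ℕ, ((k : ℝ) + 2) * ((k : ℝ) + 1) * co_p (k + 2) * z ^ k)
      hGp hG1p hODEp hy).2
  clear_value Pp P1p wp w1p Nc Eψ
  have hSpos : ∀ y ∈ Set.Ioo (0 : ℝ) (Real.pi / 2), 0 < Real.sin y := by
    intro y hy
    exact Real.sin_pos_of_pos_of_lt_pi hy.1 (by have := hy.2; linarith)
  have hCpos : ∀ y ∈ Set.Ioo (0 : ℝ) (Real.pi / 2), 0 < Real.cos y := by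
    intro y hy
    exact Real.cos_pos_of_mem_Ioo ⟨by have := hy.1; linarith, hy.2⟩
  have hune : ∀ y ∈ Set.Ioo (0 : ℝ) (Real.pi / 2), uε y ≠ 0 :=
    fun y hy => (hupos y hy).ne'
  have hκval : ∀ y ∈ Set.Ioo (0 : ℝ) (Real.pi / 2), κ y = u1f y / uε y := by
    intro y hy
    rw [hκ]
    exact ((hwU y hy).log (hune y hy)).deriv
  have hψd : ∀ y ∈ Set.Ioo (0 : ℝ) (Real.pi / 2),
      deriv (PTeigenfun α β n) y = Nc * w1p y := by
    intro y hy
    rw [hψeq]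
    exact (HasDerivAt.const_mul Nc (hwP y hy)).deriv
  have hφloc : ∀ y ∈ Set.Ioo (0 : ℝ) (Real.pi / 2),
      φ y = (-(Nc * w1p y) + (u1f y / uε y) * (Nc * wp y)) / Real.sqrt 2 := by
    intro y hy
    rw [hφ]
    beta_reduce
    rw [hψd y hy, hκval y hy, hψeq]
  set φ1f : ℝ → ℝ := fun y =>
    (-(2 * (α * (α - 1) / (2 * Real.sin y ^ 2) + β * (β - 1) / (2 * Real.cos y ^ 2) - Eψ)
        * (Nc * wp y))
      + ((2 * (α * (α - 1) / (2 * Real.sin y ^ 2) + β * (β - 1) / (2 * Real.cos y ^ 2) - ε)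
          - (u1f y / uε y) ^ 2) * (Nc * wp y)
        + (u1f y / uε y) * (Nc * w1p y))) / Real.sqrt 2 with hφ1fdef
  clear_value φ1f
  have hqd : ∀ y ∈ Set.Ioo (0 : ℝ) (Real.pi / 2), HasDerivAt (fun z => u1f z / uε z)
      (2 * (α * (α - 1) / (2 * Real.sin y ^ 2) + β * (β - 1) / (2 * Real.cos y ^ 2) - ε)
        - (u1f y / uε y) ^ 2) y := by
    intro y hy
    have h := (hw1U y hy).div (hwU y hy) (hune y hy)
    refine h.congr_deriv (Eq.symm ?_)
    field_simp [hune y hy]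
  have hdφ : ∀ y ∈ Set.Ioo (0 : ℝ) (Real.pi / 2), deriv φ y = φ1f y := by
    intro y hy
    have hev : φ =ᶠ[nhds y] fun z => (-(Nc * w1p z) + (u1f z / uε z) * (Nc * wp z))
        / Real.sqrt 2 :=
      Filter.eventuallyEq_of_mem (isOpen_Ioo.mem_nhds hy) (fun z hz => hφloc z hz)
    have hder : HasDerivAt (fun z => (-(Nc * w1p z) + (u1f z / uε z) * (Nc * wp z))
        / Real.sqrt 2) (φ1f y) y := by
      have h := ((((hw1P y hy).const_mul Nc).neg).add
        ((hqd y hy).mul ((hwP y hy).const_mul Nc))).div_const (Real.sqrt 2)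
      refine h.congr_deriv (Eq.symm ?_)
      rw [hφ1fdef]
      beta_reduce
      ring
    exact ((hev.hasDerivAt_iff).mpr hder).deriv
  have hFpos : ∀ y ∈ Set.Ioo (0 : ℝ) (Real.pi / 2),
      0 < hyp2F1 aU bU (α + 1 / 2) (Real.sin y ^ 2) := by
    intro y hy
    have h := hupos y hy
    rw [hueq y] at h
    have hSC : 0 < Real.sin y ^ α * Real.cos y ^ β :=
      mul_pos (Real.rpow_pos_of_pos (hSpos y hy) α) (Real.rpow_pos_of_pos (hCpos y hy) β)
    by_contra hF
    push_neg at hF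
    have hc := mul_nonpos_of_nonneg_of_nonpos hSC.le hF
    linarith
  have hlogv : ∀ y ∈ Set.Ioo (0 : ℝ) (Real.pi / 2),
      Real.log (vε y) = Real.log (uε y) - α * Real.log (Real.sin y)
        + (β - 1) * Real.log (Real.cos y) := by
    intro y hy
    rw [hvε, hueq y]
    beta_reduce
    rw [Real.log_mul (Real.rpow_pos_of_pos (hCpos y hy) (2 * β - 1)).ne' (hFpos y hy).ne',
      Real.log_mul (mul_pos (Real.rpow_pos_of_pos (hSpos y hy) α)
          (Real.rpow_pos_of_pos (hCpos y hy) β)).ne' (hFpos y hy).ne',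
      Real.log_mul (Real.rpow_pos_of_pos (hSpos y hy) α).ne'
        (Real.rpow_pos_of_pos (hCpos y hy) β).ne',
      Real.log_rpow (hSpos y hy), Real.log_rpow (hCpos y hy),
      Real.log_rpow (hCpos y hy)]
    ring
  have hdlogv : ∀ y ∈ Set.Ioo (0 : ℝ) (Real.pi / 2),
      deriv (fun z => Real.log (vε z)) y
        = u1f y / uε y - α * (Real.cos y / Real.sin y)
          + (β - 1) * (-Real.sin y / Real.cos y) := by
    intro y hy
    have hev : (fun z => Real.log (vε z)) =ᶠ[nhds y]
        fun z => Real.log (uε z) - α * Real.log (Real.sin z)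
          + (β - 1) * Real.log (Real.cos z) :=
      Filter.eventuallyEq_of_mem (isOpen_Ioo.mem_nhds hy) (fun z hz => hlogv z hz)
    have hder : HasDerivAt (fun z => Real.log (uε z) - α * Real.log (Real.sin z)
        + (β - 1) * Real.log (Real.cos z))
        (u1f y / uε y - α * (Real.cos y / Real.sin y)
          + (β - 1) * (-Real.sin y / Real.cos y)) y :=
      (((hwU y hy).log (hune y hy)).sub
          (((Real.hasDerivAt_sin y).log (hSpos y hy).ne').const_mul α)).add
        (((Real.hasDerivAt_cos y).log (hCpos y hy).ne').const_mul (β - 1))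
    exact ((hev.hasDerivAt_iff).mpr hder).deriv
  have hSx : 0 < Real.sin x := hSpos x hx
  have hCx : 0 < Real.cos x := hCpos x hx
  have hpy : Real.sin x ^ 2 + Real.cos x ^ 2 = 1 := Real.sin_sq_add_cos_sq x
  have hux : uε x ≠ 0 := hune x hx
  have h2ne : Real.sqrt 2 ≠ 0 := by positivity
  have hddlogv : deriv (deriv fun z : ℝ => Real.log (vε z)) x
      = (2 * (α * (α - 1) / (2 * Real.sin x ^ 2) + β * (β - 1) / (2 * Real.cos x ^ 2) - ε)
          - (u1f x / uε x) ^ 2) + α / Real.sin x ^ 2 - (β - 1) / Real.cos x ^ 2 := by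
    have hev : deriv (fun z => Real.log (vε z)) =ᶠ[nhds x]
        fun y => u1f y / uε y - α * (Real.cos y / Real.sin y)
          + (β - 1) * (-Real.sin y / Real.cos y) :=
      Filter.eventuallyEq_of_mem (isOpen_Ioo.mem_nhds hx) (fun z hz => hdlogv z hz)
    rw [hev.deriv_eq]
    have hder : HasDerivAt (fun y => u1f y / uε y - α * (Real.cos y / Real.sin y)
        + (β - 1) * (-Real.sin y / Real.cos y))
        ((2 * (α * (α - 1) / (2 * Real.sin x ^ 2) + β * (β - 1) / (2 * Real.cos x ^ 2) - ε)
          - (u1f x / uε x) ^ 2) + α / Real.sin x ^ 2 - (β - 1) / Real.cos x ^ 2) x := by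
      have h := ((hqd x hx).sub
          (((Real.hasDerivAt_cos x).div (Real.hasDerivAt_sin x) hSx.ne').const_mul α)).add
        ((((Real.hasDerivAt_sin x).neg).div (Real.hasDerivAt_cos x) hCx.ne').const_mul (β - 1))
      refine h.congr_deriv (Eq.symm ?_)
      simp only [Pi.mul_apply, Pi.neg_apply, Pi.pow_apply, Pi.add_apply, Pi.sub_apply, Pi.div_apply]
      linear_combination (-α / Real.sin x ^ 2 + (β - 1) / Real.cos x ^ 2) * hpy
    exact hder.deriv
  have hV₁x : V₁ x = α * (α - 1) / (2 * Real.sin x ^ 2) + β * (β - 1) / (2 * Real.cos x ^ 2)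
      - (2 * (α * (α - 1) / (2 * Real.sin x ^ 2) + β * (β - 1) / (2 * Real.cos x ^ 2) - ε)
          - (u1f x / uε x) ^ 2) := by
    rw [hV₁]
    beta_reduce
    rw [hddlogv]
    field_simp
    ring
  have hV : HasDerivAt (fun y => α * (α - 1) / (2 * Real.sin y ^ 2)
      + β * (β - 1) / (2 * Real.cos y ^ 2))
      (β * (β - 1) * Real.sin x / Real.cos x ^ 3 - α * (α - 1) * Real.cos x / Real.sin x ^ 3)
      x := by
    have h1 : HasDerivAt (fun y => 2 * Real.sin y ^ 2)
        (2 * ((2 : ℕ) * Real.sin x ^ (2 - 1) * Real.cos x)) x :=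
      ((Real.hasDerivAt_sin x).pow 2).const_mul 2
    have h2 : HasDerivAt (fun y => 2 * Real.cos y ^ 2)
        (2 * ((2 : ℕ) * Real.cos x ^ (2 - 1) * (-Real.sin x))) x :=
      ((Real.hasDerivAt_cos x).pow 2).const_mul 2
    have h3 := ((hasDerivAt_const x (α * (α - 1))).div h1 (by positivity)).add
      ((hasDerivAt_const x (β * (β - 1))).div h2 (by positivity))
    refine h3.congr_deriv (Eq.symm ?_)
    field_simp
    ring
  have hNwp : HasDerivAt (fun y => Nc * wp y) (Nc * w1p x) x := (hwP x hx).const_mul Nc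
  have hNw1p : HasDerivAt (fun y => Nc * w1p y)
      (Nc * (2 * (α * (α - 1) / (2 * Real.sin x ^ 2) + β * (β - 1) / (2 * Real.cos x ^ 2) - Eψ)
        * wp x)) x := (hw1P x hx).const_mul Nc
  have hq := hqd x hx
  have hstep : HasDerivAt φ1f
      ((-((2 * (β * (β - 1) * Real.sin x / Real.cos x ^ 3
            - α * (α - 1) * Real.cos x / Real.sin x ^ 3)) * (Nc * wp x)
          + (2 * (α * (α - 1) / (2 * Real.sin x ^ 2) + β * (β - 1) / (2 * Real.cos x ^ 2) - Eψ))
            * (Nc * w1p x))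
        + (((2 * (β * (β - 1) * Real.sin x / Real.cos x ^ 3
              - α * (α - 1) * Real.cos x / Real.sin x ^ 3)
            - 2 * (u1f x / uε x) * (2 * (α * (α - 1) / (2 * Real.sin x ^ 2)
                + β * (β - 1) / (2 * Real.cos x ^ 2) - ε) - (u1f x / uε x) ^ 2))
              * (Nc * wp x)
            + (2 * (α * (α - 1) / (2 * Real.sin x ^ 2) + β * (β - 1) / (2 * Real.cos x ^ 2) - ε)
                - (u1f x / uε x) ^ 2) * (Nc * w1p x))
          + ((2 * (α * (α - 1) / (2 * Real.sin x ^ 2) + β * (β - 1) / (2 * Real.cos x ^ 2) - ε)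
                - (u1f x / uε x) ^ 2) * (Nc * w1p x)
            + (u1f x / uε x) * (Nc * (2 * (α * (α - 1) / (2 * Real.sin x ^ 2)
                + β * (β - 1) / (2 * Real.cos x ^ 2) - Eψ) * wp x)))))
        / Real.sqrt 2) x := by
    rw [hφ1fdef]
    have h := (((((hV.sub_const Eψ).const_mul 2).mul hNwp).neg).add
      ((((((hV.sub_const ε).const_mul 2).sub (hq.pow 2)).mul hNwp).add
        (hq.mul hNw1p)))).div_const (Real.sqrt 2)
    refine h.congr_deriv (Eq.symm ?_)
    simp only [Pi.mul_apply, Pi.neg_apply, Pi.pow_apply, Pi.add_apply, Pi.sub_apply, Pi.div_apply]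
    beta_reduce
    push_cast
    ring
  have hev2 : deriv φ =ᶠ[nhds x] φ1f :=
    Filter.eventuallyEq_of_mem (isOpen_Ioo.mem_nhds hx) (fun z hz => hdφ z hz)
  have hder2 := (hev2.hasDerivAt_iff).mpr hstep
  rw [hφloc x hx, hV₁x, hder2.deriv]
  field_simp
  ring
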